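/- Let Γ be a d×d real matrix with spectral radius strictly less than γ for some γ ∈ (0,1), and suppose {e_n}_{n ≥ 1} is a sequence of random vectors in ℝ^d with ‖e_n‖_{L^p} ≤ C τ_n^{−1/2} for some p ≥ 1, C > 0, and τ_n = ⌊c n^a⌋ with c > 0, a > 1. Define μ_0 = 0 and μ_n = Γ μ_{n−1} + e_n. Then sup_n τ_n^{1/2} ‖μ_n‖_{L^p} < ∞. -/

import Mathlib

set_option maxHeartbeats 1000000

open MeasureTheory Filter
open scoped ENNReal NNReal

theorem aux_floor_half {x : ℝ} (hx : 1 ≤ x) : x / 2 ≤ ((⌊x⌋ : ℤ) : ℝ) := by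
  rcases le_or_gt x 2 with h | h
  · have h1 : (1:ℤ) ≤ ⌊x⌋ := Int.le_floor.2 (by exact_mod_cast hx)
    have : (1:ℝ) ≤ ((⌊x⌋:ℤ):ℝ) := by exact_mod_cast h1
    linarith
  · have := Int.sub_one_lt_floor x
    linarith

theorem aux_floor_pos {c a : ℝ} (hc : 1 ≤ c) (ha0 : 0 ≤ a) {m : ℕ} (hm : 1 ≤ m) :
    (0:ℝ) < ((⌊c * (m:ℝ) ^ a⌋ : ℤ) : ℝ) := by
  have hm1 : (1:ℝ) ≤ m := by exact_mod_cast hm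
  have hma : (1:ℝ) ≤ (m:ℝ) ^ a := by
    have := Real.rpow_le_rpow zero_le_one hm1 ha0
    rwa [Real.one_rpow] at this
  have hxm : (1:ℝ) ≤ c * (m:ℝ) ^ a := by nlinarith
  have := aux_floor_half hxm
  linarith

theorem aux_ratio (c a : ℝ) (hc : 1 ≤ c) (ha0 : 0 < a) {m n : ℕ} (hm : 1 ≤ m) (hmn : m ≤ n) :
    Real.sqrt ((⌊c * (n:ℝ) ^ a⌋ : ℤ) : ℝ) ≤
      Real.sqrt 2 * Real.sqrt ((⌊c * (m:ℝ) ^ a⌋ : ℤ) : ℝ) * ((n - m + 1 : ℕ) : ℝ) ^ (a/2) := by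
  have hm1 : (1:ℝ) ≤ m := by exact_mod_cast hm
  set q : ℕ := n - m + 1 with hq
  have hq1 : (1:ℝ) ≤ (q:ℝ) := by exact_mod_cast Nat.succ_le_succ (Nat.zero_le _)
  have hma : (1:ℝ) ≤ (m:ℝ) ^ a := by
    have := Real.rpow_le_rpow zero_le_one hm1 ha0.le
    rwa [Real.one_rpow] at this
  have hxm : (1:ℝ) ≤ c * (m:ℝ) ^ a := by nlinarith
  have hfm : c * (m:ℝ)^a / 2 ≤ ((⌊c * (m:ℝ)^a⌋ : ℤ) : ℝ) := aux_floor_half hxm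
  have hfm0 : (0:ℝ) < ((⌊c * (m:ℝ)^a⌋:ℤ):ℝ) := by linarith
  have hnat : n ≤ m * q := by
    have h1 : (n - m) ≤ m * (n - m) := Nat.le_mul_of_pos_left _ hm
    calc n = (n - m) + m := by omega
      _ ≤ m * (n - m) + m := Nat.add_le_add_right h1 m
      _ = m * q := by rw [hq, Nat.mul_add, Nat.mul_one]
  have hnle : (n:ℝ) ≤ (m:ℝ) * (q:ℝ) := by exact_mod_cast hnat
  have hqa0 : (0:ℝ) ≤ (q:ℝ) ^ a := Real.rpow_nonneg (by positivity) a
  have key : c * (n:ℝ)^a ≤ 2 * ((⌊c * (m:ℝ)^a⌋:ℤ):ℝ) * (q:ℝ)^a := by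
    have h2 : (n:ℝ)^a ≤ ((m:ℝ) * (q:ℝ))^a :=
      Real.rpow_le_rpow (by positivity) hnle ha0.le
    have h3 : ((m:ℝ) * (q:ℝ))^a = (m:ℝ)^a * (q:ℝ)^a :=
      Real.mul_rpow (by positivity) (by positivity)
    have h4 : c * (m:ℝ)^a ≤ 2 * ((⌊c * (m:ℝ)^a⌋:ℤ):ℝ) := by linarith
    calc c * (n:ℝ)^a ≤ c * ((m:ℝ)^a * (q:ℝ)^a) := by rw [← h3]; nlinarith
      _ = (c * (m:ℝ)^a) * (q:ℝ)^a := by ring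
      _ ≤ (2 * ((⌊c * (m:ℝ)^a⌋:ℤ):ℝ)) * (q:ℝ)^a :=
          mul_le_mul_of_nonneg_right h4 hqa0
      _ = _ := by ring
  have hfn : ((⌊c * (n:ℝ)^a⌋:ℤ):ℝ) ≤ c * (n:ℝ)^a := Int.floor_le _
  calc Real.sqrt ((⌊c * (n:ℝ)^a⌋:ℤ):ℝ)
      ≤ Real.sqrt (2 * ((⌊c * (m:ℝ)^a⌋:ℤ):ℝ) * (q:ℝ)^a) :=
        Real.sqrt_le_sqrt (by linarith)
    _ = Real.sqrt 2 * Real.sqrt ((⌊c * (m:ℝ)^a⌋:ℤ):ℝ) * Real.sqrt ((q:ℝ)^a) := by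
        rw [Real.sqrt_mul (by positivity), Real.sqrt_mul (by norm_num)]
    _ = Real.sqrt 2 * Real.sqrt ((⌊c * (m:ℝ)^a⌋:ℤ):ℝ) * (q:ℝ)^(a/2) := by
        have hh : Real.sqrt ((q:ℝ)^a) = (q:ℝ)^(a/2) := by
          rw [Real.sqrt_eq_rpow, ← Real.rpow_mul (by positivity)]
          ring_nf
        rw [hh]

section MatrixNorm
attribute [local instance] Matrix.linftyOpNormedRing Matrix.linftyOpNormedAlgebra

theorem aux_pow_bound {d : ℕ} (hd : 0 < d) (Γ : Matrix (Fin d) (Fin d) ℝ) (γ : ℝ)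
    (hγ0 : 0 < γ) (hγ1 : γ < 1)
    (hspec : ∀ z ∈ spectrum ℂ (Γ.map (algebraMap ℝ ℂ)), ‖z‖ < γ) :
    ∃ K : ℝ, 0 < K ∧ ∀ (k : ℕ) (v : Fin d → ℝ), ‖(Γ ^ k).mulVec v‖ ≤ K * γ ^ k * ‖v‖ := by
  haveI : Nonempty (Fin d) := ⟨⟨0, hd⟩⟩
  haveI : CompleteSpace (Matrix (Fin d) (Fin d) ℂ) := FiniteDimensional.complete ℂ _
  set B : Matrix (Fin d) (Fin d) ℂ := Γ.map (algebraMap ℝ ℂ) with hB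
  have hrad : spectralRadius ℂ B < ENNReal.ofReal γ := by
    have hne : (spectrum ℂ B).Nonempty := spectrum.nonempty B
    have := spectrum.spectralRadius_lt_of_forall_lt_of_nonempty (𝕜 := ℂ) hne
      (r := γ.toNNReal) (fun z hz => by
        have := hspec z hz
        simpa [← NNReal.coe_lt_coe, Real.coe_toNNReal _ hγ0.le,
          coe_nnnorm] using this)
    simpa [ENNReal.ofReal] using this
  -- Gelfand: eventually ‖B^k‖ ≤ γ^k
  have hgel := spectrum.pow_nnnorm_pow_one_div_tendsto_nhds_spectralRadius B
  have hev : ∀ᶠ k : ℕ in atTop, (‖B ^ k‖₊ : ENNReal) ^ (1 / (k:ℝ)) < ENNReal.ofReal γ :=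
    hgel.eventually_lt_const hrad
  obtain ⟨N, hN⟩ := (hev.and (eventually_ge_atTop 1)).exists_forall_of_atTop
  have hBN : ∀ k, N ≤ k → ‖B ^ k‖ ≤ γ ^ k := by
    intro k hk
    obtain ⟨h1, h2⟩ := hN k hk
    have hkpos : (0:ℝ) < k := by exact_mod_cast h2
    have := ENNReal.rpow_lt_rpow h1 hkpos
    rw [← ENNReal.rpow_mul, one_div, inv_mul_cancel₀ hkpos.ne', ENNReal.rpow_one,
      ENNReal.ofReal_rpow_of_pos hγ0, Real.rpow_natCast] at this
    have h3 := this.le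
    rw [← ENNReal.ofReal_coe_nnreal, ENNReal.ofReal_le_ofReal_iff (by positivity)] at h3
    simpa [coe_nnnorm] using h3
  set K : ℝ := 1 + ∑ k ∈ Finset.range N, ‖B ^ k‖ / γ ^ k with hK
  have hK1 : 1 ≤ K := by
    have : (0:ℝ) ≤ ∑ k ∈ Finset.range N, ‖B ^ k‖ / γ ^ k :=
      Finset.sum_nonneg fun k _ => by positivity
    rw [hK]; linarith
  have hKB : ∀ k, ‖B ^ k‖ ≤ K * γ ^ k := by
    intro k
    rcases le_or_gt N k with h | h
    · calc ‖B ^ k‖ ≤ γ ^ k := hBN k h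
        _ = 1 * γ ^ k := (one_mul _).symm
        _ ≤ K * γ ^ k := by gcongr
    · have hmem : k ∈ Finset.range N := Finset.mem_range.2 h
      have hle : ‖B ^ k‖ / γ ^ k ≤ ∑ j ∈ Finset.range N, ‖B ^ j‖ / γ ^ j :=
        Finset.single_le_sum (f := fun j => ‖B ^ j‖ / γ ^ j)
          (fun j _ => by positivity) hmem
      have : ‖B ^ k‖ / γ ^ k ≤ K := by rw [hK]; linarith
      calc ‖B ^ k‖ = (‖B ^ k‖ / γ ^ k) * γ ^ k := by field_simp
        _ ≤ K * γ ^ k := mul_le_mul_of_nonneg_right this (by positivity)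
  refine ⟨K, by linarith, fun k v => ?_⟩
  -- pass to complex
  have hmap : B ^ k = (Γ ^ k).map (algebraMap ℝ ℂ) := by
    rw [hB]
    exact (map_pow (RingHom.mapMatrix (algebraMap ℝ ℂ)) Γ k).symm
  set w : Fin d → ℂ := fun i => ((v i : ℝ) : ℂ) with hw
  have hvec : (B ^ k).mulVec w = fun i => (((Γ ^ k).mulVec v i : ℝ) : ℂ) := by
    funext i
    rw [hmap]
    exact (RingHom.map_mulVec (algebraMap ℝ ℂ) (Γ ^ k) v i).symm
  have hnorm1 : ‖(Γ ^ k).mulVec v‖ = ‖(B ^ k).mulVec w‖ := by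
    rw [hvec]
    simp [Pi.norm_def, Pi.nnnorm_def]
  have hnorm2 : ‖w‖ = ‖v‖ := by simp [hw, Pi.norm_def, Pi.nnnorm_def]
  calc ‖(Γ ^ k).mulVec v‖ = ‖(B ^ k).mulVec w‖ := hnorm1
    _ ≤ ‖B ^ k‖ * ‖w‖ := Matrix.linfty_opNorm_mulVec _ _
    _ ≤ (K * γ ^ k) * ‖v‖ := by
      rw [hnorm2]
      exact mul_le_mul_of_nonneg_right (hKB k) (norm_nonneg v)
end MatrixNorm

theorem stmt_8 {d : ℕ} {Ω : Type*} [MeasurableSpace Ω] (P : Measure Ω)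
    [IsProbabilityMeasure P] (Γ : Matrix (Fin d) (Fin d) ℝ) (γ : ℝ)
    (hγ : γ ∈ Set.Ioo (0 : ℝ) 1)
    (hspec : ∀ z ∈ spectrum ℂ (Γ.map (algebraMap ℝ ℂ)), ‖z‖ < γ)
    (e : ℕ → Ω → (Fin d → ℝ)) (hmeas : ∀ n, AEStronglyMeasurable (e n) P)
    (p : ℝ≥0∞) (hp : 1 ≤ p) (C c a : ℝ) (hC : 0 < C) (hc : 1 ≤ c) (ha : 1 < a)
    (he : ∀ n : ℕ, 1 ≤ n →
      eLpNorm (e n) p P ≤ ENNReal.ofReal (C / Real.sqrt ((⌊c * (n : ℝ) ^ a⌋ : ℤ) : ℝ)))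
    (μseq : ℕ → Ω → (Fin d → ℝ)) (hμ0 : μseq 0 = fun _ => 0)
    (hμrec : ∀ n, μseq (n + 1) = fun ω => Γ.mulVec (μseq n ω) + e (n + 1) ω) :
    (⨆ n : ℕ, ENNReal.ofReal (Real.sqrt ((⌊c * (n : ℝ) ^ a⌋ : ℤ) : ℝ)) *
        eLpNorm (μseq n) p P) < ⊤ := by
  obtain ⟨hγ0, hγ1⟩ := hγ
  rcases Nat.eq_zero_or_pos d with hd | hd
  · subst hd
    have hz : ∀ n, eLpNorm (μseq n) p P = 0 := by
      intro n
      have hμz : μseq n = (fun _ => (0 : Fin 0 → ℝ)) := by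
        funext ω; exact Subsingleton.elim _ _
      rw [hμz]
      exact eLpNorm_zero
    simp only [hz, mul_zero, iSup_const]
    exact ENNReal.zero_lt_top
  obtain ⟨K, hK0, hKb⟩ := aux_pow_bound hd Γ γ hγ0 hγ1 hspec
  set g : ℕ → ℝ := fun n => Real.sqrt ((⌊c * (n:ℝ) ^ a⌋ : ℤ) : ℝ) with hg
  set b : ℕ := ⌈a⌉₊ with hb
  have hab : a / 2 ≤ (b:ℝ) := le_trans (by linarith) (Nat.le_ceil a)
  have hγabs : ‖γ‖ < 1 := by rw [Real.norm_eq_abs, abs_of_pos hγ0]; exact hγ1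
  have hsum0 : Summable (fun k : ℕ => (k:ℝ)^b * γ^k) :=
    summable_pow_mul_geometric_of_norm_lt_one b hγabs
  have hsum1 : Summable (fun k : ℕ => ((k+1:ℕ):ℝ)^b * γ^(k+1)) :=
    (summable_nat_add_iff 1).2 hsum0
  have hsum : Summable (fun k : ℕ => γ^k * ((k+1:ℕ):ℝ)^b) := by
    refine (hsum1.mul_left (1/γ)).congr fun k => ?_
    field_simp
    ring
  set S : ℝ := ∑' k, γ^k * ((k+1:ℕ):ℝ)^b with hS
  have hS0 : 0 ≤ S := tsum_nonneg fun k => by positivity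
  have hpart : ∀ n : ℕ, (∑ k ∈ Finset.range n, γ^k * ((k+1:ℕ):ℝ)^b) ≤ S :=
    fun n => Summable.sum_le_tsum (Finset.range n) (fun k _ => by positivity) hsum
  -- representation μ_n = ∑ Γ^{n-1-i} e_{i+1}
  have hrep : ∀ n : ℕ, μseq n
      = fun ω => ∑ i ∈ Finset.range n, (Γ ^ (n - 1 - i)).mulVec (e (i+1) ω) := by
    intro n
    induction n with
    | zero => simpa using hμ0
    | succ n ih =>
      rw [hμrec n, ih]
      funext ω
      rw [Finset.sum_range_succ]
      have hl : Γ.mulVec (∑ i ∈ Finset.range n, (Γ ^ (n - 1 - i)).mulVec (e (i+1) ω))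
          = ∑ i ∈ Finset.range n, (Γ ^ (n + 1 - 1 - i)).mulVec (e (i+1) ω) := by
        rw [← Matrix.mulVecLin_apply, map_sum]
        refine Finset.sum_congr rfl fun i hi => ?_
        have hi' : i < n := Finset.mem_range.1 hi
        rw [Matrix.mulVecLin_apply, Matrix.mulVec_mulVec]
        have hx : n + 1 - 1 - i = (n - 1 - i) + 1 := by omega
        rw [hx, pow_succ']
      rw [hl]
      congr 1
      have h0 : n + 1 - 1 - n = 0 := by omega
      rw [h0, pow_zero, Matrix.one_mulVec]
  -- measurability of terms
  have htm : ∀ (j i : ℕ), AEStronglyMeasurable (fun ω => (Γ ^ j).mulVec (e i ω)) P := by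
    intro j i
    have hcont : Continuous fun v : Fin d → ℝ => (Γ ^ j).mulVec v := by
      have hcl := (Γ ^ j).mulVecLin.continuous_of_finiteDimensional
      exact hcl
    exact hcont.comp_aestronglyMeasurable (hmeas i)
  have hbound : ∀ n : ℕ, 1 ≤ n →
      ENNReal.ofReal (g n) * eLpNorm (μseq n) p P
        ≤ ENNReal.ofReal (Real.sqrt 2 * K * C * S) := by
    intro n hn
    have h1 : eLpNorm (μseq n) p P ≤
        ∑ i ∈ Finset.range n,
          ENNReal.ofReal (K * γ ^ (n-1-i)) * ENNReal.ofReal (C / g (i+1)) := by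
      rw [hrep n]
      have hfun : (fun ω => ∑ i ∈ Finset.range n, (Γ ^ (n - 1 - i)).mulVec (e (i+1) ω))
          = ∑ i ∈ Finset.range n, (fun ω => (Γ ^ (n - 1 - i)).mulVec (e (i+1) ω)) := by
        funext ω; simp
      rw [hfun]
      refine le_trans (eLpNorm_sum_le (fun i _ => htm _ _) hp) ?_
      refine Finset.sum_le_sum fun i hi => ?_
      have hterm : eLpNorm (fun ω => (Γ ^ (n-1-i)).mulVec (e (i+1) ω)) p P ≤
          (K * γ ^ (n-1-i)).toNNReal • eLpNorm (e (i+1)) p P := by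
        refine eLpNorm_le_nnreal_smul_eLpNorm_of_ae_le_mul ?_ p
        refine Filter.Eventually.of_forall fun ω => ?_
        rw [← NNReal.coe_le_coe, NNReal.coe_mul, Real.coe_toNNReal _ (by positivity),
          coe_nnnorm, coe_nnnorm]
        exact hKb _ _
      refine le_trans hterm ?_
      rw [ENNReal.smul_def, smul_eq_mul]
      have hcoe : (((K * γ ^ (n-1-i)).toNNReal : ℝ≥0) : ℝ≥0∞)
          = ENNReal.ofReal (K * γ ^ (n-1-i)) := rfl
      rw [hcoe]
      exact mul_le_mul_right (he (i+1) (by omega)) _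
    calc ENNReal.ofReal (g n) * eLpNorm (μseq n) p P
        ≤ ∑ i ∈ Finset.range n, ENNReal.ofReal (g n) *
            (ENNReal.ofReal (K * γ ^ (n-1-i)) * ENNReal.ofReal (C / g (i+1))) := by
          rw [← Finset.mul_sum]
          exact mul_le_mul_right h1 _
      _ ≤ ∑ i ∈ Finset.range n,
            ENNReal.ofReal ((Real.sqrt 2 * K * C) * (γ^(n-1-i) * ((n-i:ℕ):ℝ)^b)) := by
          refine Finset.sum_le_sum fun i hi => ?_
          have hi' : i < n := Finset.mem_range.1 hi
          rw [← ENNReal.ofReal_mul (by positivity), ← ENNReal.ofReal_mul (by positivity)]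
          refine ENNReal.ofReal_le_ofReal ?_
          -- real inequality
          have hgm0 : 0 < g (i+1) := by
            rw [hg]
            exact Real.sqrt_pos.2 (aux_floor_pos hc (by linarith) (Nat.le_add_left 1 i))
          have hr0 := aux_ratio c a hc (by linarith) (Nat.le_add_left 1 i)
            (by omega : i + 1 ≤ n)
          have hcast : ((n - (i+1) + 1 : ℕ) : ℝ) = ((n - i : ℕ) : ℝ) := by
            congr 1
            omega
          rw [hcast] at hr0
          have hni1 : (1:ℝ) ≤ ((n-i:ℕ):ℝ) := by
            have : 1 ≤ n - i := by omega
            exact_mod_cast this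
          have hqb : ((n-i:ℕ):ℝ)^(a/2) ≤ ((n-i:ℕ):ℝ)^(b:ℕ) := by
            rw [← Real.rpow_natCast ((n-i:ℕ):ℝ) b]
            exact Real.rpow_le_rpow_of_exponent_le hni1 hab
          set X : ℝ := ((n-i:ℕ):ℝ)^(b:ℕ) with hX
          have hX0 : 0 ≤ X := by positivity
          have hr' : g n ≤ Real.sqrt 2 * g (i+1) * X := by
            refine le_trans hr0 ?_
            have h2 : (0:ℝ) ≤ Real.sqrt 2 * g (i+1) := by positivity
            exact mul_le_mul_of_nonneg_left hqb h2
          have hKC : (0:ℝ) ≤ K * C * γ^(n-1-i) / g (i+1) := by positivity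
          have step := mul_le_mul_of_nonneg_left hr' hKC
          calc g n * (K * γ ^ (n-1-i) * (C / g (i+1)))
              = (K * C * γ^(n-1-i) / g (i+1)) * g n := by ring
            _ ≤ (K * C * γ^(n-1-i) / g (i+1)) * (Real.sqrt 2 * g (i+1) * X) := step
            _ = (Real.sqrt 2 * K * C) * (γ^(n-1-i) * X) := by
                field_simp
      _ = ENNReal.ofReal (∑ i ∈ Finset.range n,
            (Real.sqrt 2 * K * C) * (γ^(n-1-i) * ((n-i:ℕ):ℝ)^b)) :=
          (ENNReal.ofReal_sum_of_nonneg fun i _ => by positivity).symm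
      _ ≤ ENNReal.ofReal (Real.sqrt 2 * K * C * S) := by
          refine ENNReal.ofReal_le_ofReal ?_
          rw [← Finset.mul_sum]
          have hrefl : (∑ i ∈ Finset.range n, γ^(n-1-i) * (((n-i:ℕ)):ℝ)^b) ≤ S := by
            have heq : ∀ i ∈ Finset.range n, γ^(n-1-i) * (((n-i:ℕ)):ℝ)^b
                = (fun k => γ^k * ((k+1:ℕ):ℝ)^b) (n-1-i) := by
              intro i hi
              have hi' : i < n := Finset.mem_range.1 hi
              have h' : n - i = (n-1-i)+1 := by omega
              simp only [h']
            rw [Finset.sum_congr rfl heq]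
            exact le_trans (le_of_eq
              (Finset.sum_range_reflect (fun k => γ^k * ((k+1:ℕ):ℝ)^b) n)) (hpart n)
          exact mul_le_mul_of_nonneg_left hrefl (by positivity)
  refine lt_of_le_of_lt (iSup_le fun n => ?_)
    (ENNReal.ofReal_lt_top : ENNReal.ofReal (Real.sqrt 2 * K * C * S) < ⊤)
  rcases Nat.eq_zero_or_pos n with rfl | hn
  · have hg0 : g 0 = 0 := by
      simp [hg, Real.zero_rpow (by linarith : a ≠ 0)]
    rw [show ENNReal.ofReal (g 0) = 0 by rw [hg0]; exact ENNReal.ofReal_zero]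
    simp
  · exact hbound n hn
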